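/- If asymmetric atomic deduction modulo a rewrite relation R has the cut elimination property (every provable sequent has a cut-free proof), then R is confluent. -/
import Mathlib


open Relation

/--
Asymmetric atomic deduction modulo a rewrite relation `R` on atomic propositions `α`.
Sequents are pairs of finite multisets of atomic propositions; `→*` is the
reflexive-transitive closure `Relation.ReflTransGen R` of `R`.
The Boolean index records whether the Cut rule is allowed:
`AsymDed R true Γ Δ` is provability in the full system, `AsymDed R false Γ Δ`
is provability by a cut-free proof.
-/
inductive AsymDed (R : α → α → Prop) : Bool → Multiset α → Multiset α → Prop
  | ax {b : Bool} (Γ Δ : Multiset α) (A₁ A₂ C : α)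
      (h₁ : ReflTransGen R A₁ C) (h₂ : ReflTransGen R A₂ C) :
      AsymDed R b (A₁ ::ₘ Γ) (A₂ ::ₘ Δ)
  | cut (Γ Δ : Multiset α) (C C₁ C₂ : α)
      (h₁ : ReflTransGen R C C₁) (h₂ : ReflTransGen R C C₂)
      (p₁ : AsymDed R true Γ (C₁ ::ₘ Δ)) (p₂ : AsymDed R true (C₂ ::ₘ Γ) Δ) :
      AsymDed R true Γ Δ
  | contrL {b : Bool} (Γ Δ : Multiset α) (A A₁ A₂ : α)
      (h₁ : ReflTransGen R A A₁) (h₂ : ReflTransGen R A A₂)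
      (p : AsymDed R b (A₁ ::ₘ A₂ ::ₘ Γ) Δ) :
      AsymDed R b (A ::ₘ Γ) Δ
  | contrR {b : Bool} (Γ Δ : Multiset α) (A A₁ A₂ : α)
      (h₁ : ReflTransGen R A A₁) (h₂ : ReflTransGen R A A₂)
      (p : AsymDed R b Γ (A₁ ::ₘ A₂ ::ₘ Δ)) :
      AsymDed R b Γ (A ::ₘ Δ)
  | weakL {b : Bool} (Γ Δ : Multiset α) (A : α)
      (p : AsymDed R b Γ Δ) :
      AsymDed R b (A ::ₘ Γ) Δ
  | weakR {b : Bool} (Γ Δ : Multiset α) (A : α)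
      (p : AsymDed R b Γ Δ) :
      AsymDed R b Γ (A ::ₘ Δ)

/-- `R` is confluent: any two reducts of a common element have a common reduct. -/
def Confluent {α : Type*} (R : α → α → Prop) : Prop :=
  ∀ A B C : α, Relation.ReflTransGen R A B → Relation.ReflTransGen R A C →
    ∃ D, Relation.ReflTransGen R B D ∧ Relation.ReflTransGen R C D

lemma cutfree_joins {α : Type*} {R : α → α → Prop} {Γ Δ : Multiset α}
    (p : AsymDed R false Γ Δ) :
    ∀ B C : α, (∀ x ∈ Γ, ReflTransGen R B x) → (∀ x ∈ Δ, ReflTransGen R C x) →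
      ∃ D, ReflTransGen R B D ∧ ReflTransGen R C D := by
  generalize hb : false = b at p
  induction p with
  | ax Γ Δ A₁ A₂ E h₁ h₂ =>
    intro B C hΓ hΔ
    exact ⟨E, (hΓ A₁ (Multiset.mem_cons_self _ _)).trans h₁,
      (hΔ A₂ (Multiset.mem_cons_self _ _)).trans h₂⟩
  | cut => exact absurd hb (by simp)
  | contrL Γ Δ A A₁ A₂ h₁ h₂ p ih =>
    intro B C hΓ hΔ
    have hBA := hΓ A (Multiset.mem_cons_self _ _)
    refine ih hb B C ?_ hΔ
    intro x hx
    rcases Multiset.mem_cons.mp hx with rfl | hx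
    · exact hBA.trans h₁
    rcases Multiset.mem_cons.mp hx with rfl | hx
    · exact hBA.trans h₂
    · exact hΓ x (Multiset.mem_cons_of_mem hx)
  | contrR Γ Δ A A₁ A₂ h₁ h₂ p ih =>
    intro B C hΓ hΔ
    have hCA := hΔ A (Multiset.mem_cons_self _ _)
    refine ih hb B C hΓ ?_
    intro x hx
    rcases Multiset.mem_cons.mp hx with rfl | hx
    · exact hCA.trans h₁
    rcases Multiset.mem_cons.mp hx with rfl | hx
    · exact hCA.trans h₂
    · exact hΔ x (Multiset.mem_cons_of_mem hx)
  | weakL Γ Δ A p ih =>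
    intro B C hΓ hΔ
    exact ih hb B C (fun x hx => hΓ x (Multiset.mem_cons_of_mem hx)) hΔ
  | weakR Γ Δ A p ih =>
    intro B C hΓ hΔ
    exact ih hb B C hΓ (fun x hx => hΔ x (Multiset.mem_cons_of_mem hx))

/--
If asymmetric atomic deduction modulo `R` has the cut elimination property
(every provable sequent has a cut-free proof), then `R` is confluent.
-/
theorem confluent_of_asymDed_cut_elimination {α : Type*} (R : α → α → Prop)
    (hce : ∀ Γ Δ : Multiset α, AsymDed R true Γ Δ → AsymDed R false Γ Δ) :
    Confluent R := by
  intro A B C hAB hAC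
  have p : AsymDed R true ({B} : Multiset α) ({C} : Multiset α) := by
    refine AsymDed.cut _ _ A B C hAB hAC ?_ ?_
    · exact AsymDed.ax 0 {C} B B B ReflTransGen.refl ReflTransGen.refl
    · exact AsymDed.ax {B} 0 C C C ReflTransGen.refl ReflTransGen.refl
  have pf := hce _ _ p
  refine cutfree_joins pf B C ?_ ?_ <;>
    · intro x hx
      simp only [Multiset.mem_singleton] at hx
      subst hx
      exact ReflTransGen.refl
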